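/- Let F : ℝ^d → ℝ^d be L-Lipschitz and monotone with F z_* = 0 for some z_* ∈ ℝ^d, let z₀ ∈ ℝ^d be deterministic, and let (ξ_{k/2})_{k≥0} be mutually independent ℝ^d-valued random variables with E[ξ_{k/2}] = 0 and E[‖ξ_{k/2}‖²] = σ_{k/2}² < ∞. Define the S-FEG iterates z_{k+1/2} = z_k + (1/(k+1))(z₀ − z_k) − (1 − 1/(k+1))(1/L)(F z_k + ξ_k) and z_{k+1} = z_k + (1/(k+1))(z₀ − z_k) − (1/L)(F z_{k+1/2} + ξ_{k+1/2}) for k ≥ 0. Then for all k ≥ 1, E[‖F z_k‖²] ≤ 4L²‖z₀ − z_*‖²/k² + (6/k²)·(σ₀² + Σ_{l=1}^{k−1} (l² σ_l² + (l+1)² σ_{l+1/2}²)). -/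

import Mathlib

open MeasureTheory ProbabilityTheory
open scoped RealInnerProductSpace

set_option maxHeartbeats 4000000

namespace SFEGAux

variable {E : Type*} [NormedAddCommGroup E] [InnerProductSpace ℝ E]

lemma onestep_ineq (K L : ℝ) (hK : 0 ≤ K) (hL : 0 < L)
    (z0 z w z' a b c ξ η : E)
    (hw : w = z + ((K+1)⁻¹) • (z0 - z) - ((1 - (K+1)⁻¹) * (1/L)) • (a + ξ))
    (hz' : z' = z + ((K+1)⁻¹) • (z0 - z) - (1/L) • (b + η))
    (hmono : 0 ≤ ⟪c - a, z' - z⟫)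
    (hlip : ‖c - b‖ ≤ L * ‖z' - w‖) :
    ((K+1)^2/2) * ‖c‖^2 + (K+1) * L * ⟪c, z' - z0⟫ ≤
      (K^2/2) * ‖a‖^2 + K * L * ⟪a, z - z0⟫ + K^2 * ⟪a, ξ⟫ - K*(K+1) * ⟪b, ξ⟫
      + (K+1)^2 * ⟪b - c, η⟫ + (K^2/2) * ‖ξ‖^2 + ((K+1)^2/2) * ‖η‖^2
      - K*(K+1) * ⟪ξ, η⟫ := by
  have hK1 : K + 1 ≠ 0 := by positivity
  have hL' : L ≠ 0 := ne_of_gt hL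
  have hlip2 : ‖c - b‖^2 ≤ L^2 * ‖z' - w‖^2 := by
    nlinarith [norm_nonneg (z' - w), norm_nonneg (c - b)]
  have hmono' : 0 ≤ K*(K+1)*L * ⟪c - a, z' - z⟫ := by positivity
  have hlipterm : 0 ≤ ((K+1)^2/2) * (L^2 * ‖z' - w‖^2 - ‖c - b‖^2) := by
    have h0 : 0 ≤ L^2 * ‖z' - w‖^2 - ‖c - b‖^2 := by linarith
    positivity
  have key : (((K+1)^2/2) * ‖c‖^2 + (K+1) * L * ⟪c, z' - z0⟫)
      - ((K^2/2) * ‖a‖^2 + K * L * ⟪a, z - z0⟫ + K^2 * ⟪a, ξ⟫ - K*(K+1) * ⟪b, ξ⟫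
      + (K+1)^2 * ⟪b - c, η⟫ + (K^2/2) * ‖ξ‖^2 + ((K+1)^2/2) * ‖η‖^2
      - K*(K+1) * ⟪ξ, η⟫)
      + K*(K+1)*L * ⟪c - a, z' - z⟫
      + ((K+1)^2/2) * (L^2 * ‖z' - w‖^2 - ‖c - b‖^2) = 0 := by
    subst hw hz'
    simp only [← real_inner_self_eq_norm_sq, inner_sub_left, inner_sub_right,
      inner_add_left, inner_add_right, real_inner_smul_left, real_inner_smul_right,
      real_inner_comm z z0, real_inner_comm a z0, real_inner_comm a z,
      real_inner_comm b z0, real_inner_comm b z, real_inner_comm b a,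
      real_inner_comm c z0, real_inner_comm c z, real_inner_comm c a, real_inner_comm c b,
      real_inner_comm ξ z0, real_inner_comm ξ z, real_inner_comm ξ a, real_inner_comm ξ b,
      real_inner_comm ξ c, real_inner_comm η z0, real_inner_comm η z, real_inner_comm η a,
      real_inner_comm η b, real_inner_comm η c, real_inner_comm η ξ]
    field_simp
    ring
  linarith

lemma replace_inner (p phat q : E) (t : ℝ) (h : ‖p - phat‖ ≤ t * ‖q‖) :
    -⟪p, q⟫ ≤ t * ‖q‖^2 - ⟪phat, q⟫ := by
  have h1 : -⟪p - phat, q⟫ ≤ ‖p - phat‖ * ‖q‖ := by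
    have h2 := abs_real_inner_le_norm (p - phat) q
    have h3 := abs_le.1 h2
    linarith [h3.1]
  have h2 : ‖p - phat‖ * ‖q‖ ≤ t * ‖q‖ * ‖q‖ :=
    mul_le_mul_of_nonneg_right h (norm_nonneg q)
  rw [inner_sub_left] at h1
  nlinarith [sq_abs (‖q‖)]

lemma step_pathwise (K L : ℝ) (hK : 0 ≤ K) (hL : 0 < L)
    (z0 z w z' what zhat a b c aw az ξ η : E)
    (hw : w = z + ((K+1)⁻¹) • (z0 - z) - ((1 - (K+1)⁻¹) * (1/L)) • (a + ξ))
    (hwhat : what = z + ((K+1)⁻¹) • (z0 - z) - ((1 - (K+1)⁻¹) * (1/L)) • a)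
    (hz' : z' = z + ((K+1)⁻¹) • (z0 - z) - (1/L) • (b + η))
    (hzhat : zhat = z + ((K+1)⁻¹) • (z0 - z) - (1/L) • b)
    (hmono : 0 ≤ ⟪c - a, z' - z⟫)
    (hlip : ‖c - b‖ ≤ L * ‖z' - w‖)
    (hlipw : ‖b - aw‖ ≤ L * ‖w - what‖)
    (hlipz : ‖c - az‖ ≤ L * ‖z' - zhat‖) :
    ((K+1)^2/2) * ‖c‖^2 + (K+1) * L * ⟪c, z' - z0⟫ ≤
      (K^2/2) * ‖a‖^2 + K * L * ⟪a, z - z0⟫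
      + K^2 * ⟪a, ξ⟫ - K*(K+1) * ⟪aw, ξ⟫ + (K+1)^2 * ⟪b, η⟫ - (K+1)^2 * ⟪az, η⟫
      - K*(K+1) * ⟪ξ, η⟫ + (3/2)*K^2 * ‖ξ‖^2 + (3/2)*(K+1)^2 * ‖η‖^2 := by
  have hK1 : (0:ℝ) < K + 1 := by linarith
  have hL' : L ≠ 0 := ne_of_gt hL
  have hβ : (0:ℝ) ≤ 1 - (K+1)⁻¹ := by
    have h0 : (K+1)⁻¹ ≤ 1 := by
      rw [inv_le_one_iff₀]; right; linarith
    linarith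
  have h1 := onestep_ineq K L hK hL z0 z w z' a b c ξ η hw hz' hmono hlip
  have hsub : (⟪b - c, η⟫ : ℝ) = ⟪b, η⟫ - ⟪c, η⟫ := inner_sub_left _ _ _
  rw [hsub] at h1
  -- bound for the w-noise cross term
  have hwd : w - what = -(((1 - (K+1)⁻¹) * (1/L)) • ξ) := by
    rw [hw, hwhat, smul_add]; abel
  have hnw : ‖w - what‖ = ((1 - (K+1)⁻¹) * (1/L)) * ‖ξ‖ := by
    rw [hwd, norm_neg, norm_smul, Real.norm_eq_abs, abs_of_nonneg (by positivity)]
  have hlipw' : ‖b - aw‖ ≤ (1 - (K+1)⁻¹) * ‖ξ‖ := by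
    calc ‖b - aw‖ ≤ L * ‖w - what‖ := hlipw
      _ = (1 - (K+1)⁻¹) * ‖ξ‖ := by rw [hnw]; field_simp
  have hrw := replace_inner b aw ξ (1 - (K+1)⁻¹) hlipw'
  have hcw : -(K*(K+1)*⟪b,ξ⟫) ≤ K^2*‖ξ‖^2 - K*(K+1)*⟪aw,ξ⟫ := by
    have h2 : K*(K+1) * ((1 - (K+1)⁻¹) * ‖ξ‖^2 - ⟪aw,ξ⟫)
        = K^2*‖ξ‖^2 - K*(K+1)*⟪aw,ξ⟫ := by field_simp; ring
    calc -(K*(K+1)*⟪b,ξ⟫) = K*(K+1) * (-⟪b,ξ⟫) := by ring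
      _ ≤ K*(K+1) * ((1 - (K+1)⁻¹) * ‖ξ‖^2 - ⟪aw,ξ⟫) :=
          mul_le_mul_of_nonneg_left hrw (by positivity)
      _ = _ := h2
  -- bound for the z'-noise cross term
  have hzd : z' - zhat = -((1/L) • η) := by
    rw [hz', hzhat, smul_add]; abel
  have hnz : ‖z' - zhat‖ = (1/L) * ‖η‖ := by
    rw [hzd, norm_neg, norm_smul, Real.norm_eq_abs, abs_of_nonneg (by positivity)]
  have hlipz' : ‖c - az‖ ≤ 1 * ‖η‖ := by
    calc ‖c - az‖ ≤ L * ‖z' - zhat‖ := hlipz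
      _ = 1 * ‖η‖ := by rw [hnz]; field_simp
  have hrz := replace_inner c az η 1 hlipz'
  have hcz : -((K+1)^2*⟪c,η⟫) ≤ (K+1)^2*‖η‖^2 - (K+1)^2*⟪az,η⟫ := by
    calc -((K+1)^2*⟪c,η⟫) = (K+1)^2 * (-⟪c,η⟫) := by ring
      _ ≤ (K+1)^2 * (1 * ‖η‖^2 - ⟪az,η⟫) :=
          mul_le_mul_of_nonneg_left hrz (by positivity)
      _ = (K+1)^2*‖η‖^2 - (K+1)^2*⟪az,η⟫ := by ring
  nlinarith [h1, hcw, hcz]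

lemma v1_ineq (L : ℝ) (hL : 0 < L) (z0 z1 a c ξ : E)
    (hz1 : z1 = z0 - (1/L) • (a + ξ))
    (hlip : ‖c - a‖ ≤ L * ‖z1 - z0‖) :
    (1/2) * ‖c‖^2 + L * ⟪c, z1 - z0⟫ ≤ ⟪a, ξ⟫ - ⟪c, ξ⟫ + (1/2) * ‖ξ‖^2 := by
  have hL' : L ≠ 0 := ne_of_gt hL
  have hd : z1 - z0 = -((1/L) • (a + ξ)) := by rw [hz1]; abel
  have hnorm : ‖z1 - z0‖ = (1/L) * ‖a + ξ‖ := by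
    rw [hd, norm_neg, norm_smul]
    simp [abs_of_pos hL]
  have hlip2 : ‖c - a‖^2 ≤ ‖a + ξ‖^2 := by
    rw [hnorm] at hlip
    have h0 : ‖c - a‖ ≤ ‖a + ξ‖ := by
      rw [← mul_assoc] at hlip; field_simp at hlip; linarith
    nlinarith [norm_nonneg (c - a), norm_nonneg (a + ξ)]
  have e1 : ‖c - a‖^2 = ‖c‖^2 - 2 * ⟪c, a⟫ + ‖a‖^2 := norm_sub_sq_real c a
  have e2 : ‖a + ξ‖^2 = ‖a‖^2 + 2 * ⟪a, ξ⟫ + ‖ξ‖^2 := norm_add_sq_real a ξ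
  have e3 : L * ⟪c, z1 - z0⟫ = -⟪c, a⟫ - ⟪c, ξ⟫ := by
    rw [hd, inner_neg_right, real_inner_smul_right, inner_add_right]
    field_simp
    ring
  linarith

lemma v1_pathwise (L : ℝ) (hL : 0 < L) (z0 z1 zhat0 a c az ξ : E)
    (hz1 : z1 = z0 - (1/L) • (a + ξ))
    (hzhat0 : zhat0 = z0 - (1/L) • a)
    (hlip : ‖c - a‖ ≤ L * ‖z1 - z0‖)
    (hlipz : ‖c - az‖ ≤ L * ‖z1 - zhat0‖) :
    (1/2) * ‖c‖^2 + L * ⟪c, z1 - z0⟫ ≤ ⟪a, ξ⟫ - ⟪az, ξ⟫ + (3/2) * ‖ξ‖^2 := by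
  have hL' : L ≠ 0 := ne_of_gt hL
  have h1 := v1_ineq L hL z0 z1 a c ξ hz1 hlip
  have hd : z1 - zhat0 = -((1/L) • ξ) := by
    rw [hz1, hzhat0, smul_add]; abel
  have hn : ‖z1 - zhat0‖ = (1/L) * ‖ξ‖ := by
    rw [hd, norm_neg, norm_smul, Real.norm_eq_abs, abs_of_nonneg (by positivity)]
  have hlipz' : ‖c - az‖ ≤ 1 * ‖ξ‖ := by
    calc ‖c - az‖ ≤ L * ‖z1 - zhat0‖ := hlipz
      _ = 1 * ‖ξ‖ := by rw [hn]; field_simp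
  have hr := replace_inner c az ξ 1 hlipz'
  nlinarith [h1, hr]

variable {Ω : Type*} [MeasurableSpace Ω] {μ : Measure Ω}

lemma integrable_inner_of {X Y : Ω → E} (hX : MemLp X 2 μ) (hY : MemLp Y 2 μ) :
    Integrable (fun ω => ⟪X ω, Y ω⟫) μ := by
  have h := L2.integrable_inner (𝕜 := ℝ) (hX.toLp X) (hY.toLp Y)
  refine h.congr ?_
  filter_upwards [hX.coeFn_toLp, hY.coeFn_toLp] with ω h1 h2
  rw [h1, h2]

lemma indep_integral_inner_zero {d : ℕ}
    {X Y : Ω → EuclideanSpace ℝ (Fin d)} (hXY : IndepFun X Y μ)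
    (hX : MemLp X 2 μ) (hY : MemLp Y 2 μ) [IsProbabilityMeasure μ]
    (hYm : ∫ ω, Y ω ∂μ = 0) :
    ∫ ω, ⟪X ω, Y ω⟫ ∂μ = 0 := by
  have hXi : Integrable X μ := hX.integrable one_le_two
  have hYi : Integrable Y μ := hY.integrable one_le_two
  have hXc : ∀ i : Fin d, MemLp (fun ω => X ω i) 2 μ := fun i =>
    (EuclideanSpace.proj i : EuclideanSpace ℝ (Fin d) →L[ℝ] ℝ).comp_memLp' hX
  have hYc : ∀ i : Fin d, MemLp (fun ω => Y ω i) 2 μ := fun i =>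
    (EuclideanSpace.proj i : EuclideanSpace ℝ (Fin d) →L[ℝ] ℝ).comp_memLp' hY
  have hcomp : ∀ i : Fin d, Integrable (fun ω => X ω i * Y ω i) μ := by
    intro i
    have h0 := integrable_inner_of (hXc i) (hYc i)
    simpa [RCLike.inner_apply, conj_trivial, mul_comm] using h0
  have hexp : (∫ ω, ⟪X ω, Y ω⟫ ∂μ) = ∑ i : Fin d, ∫ ω, X ω i * Y ω i ∂μ := by
    simp_rw [PiLp.inner_apply, RCLike.inner_apply, conj_trivial]
    rw [← integral_finset_sum _ (fun i _ => hcomp i)]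
    congr 1; funext ω; exact Finset.sum_congr rfl (fun i _ => mul_comm _ _)
  rw [hexp]
  refine Finset.sum_eq_zero fun i _ => ?_
  have hind : IndepFun (fun ω => X ω i) (fun ω => Y ω i) μ :=
    hXY.comp (EuclideanSpace.proj (𝕜 := ℝ) i).measurable
      (EuclideanSpace.proj (𝕜 := ℝ) i).measurable
  have hmul : (∫ ω, X ω i * Y ω i ∂μ) = (∫ ω, X ω i ∂μ) * ∫ ω, Y ω i ∂μ :=
    hind.integral_fun_mul_eq_mul_integral ((EuclideanSpace.proj (𝕜 := ℝ) i).integrable_comp hXi).aestronglyMeasurable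
      ((EuclideanSpace.proj (𝕜 := ℝ) i).integrable_comp hYi).aestronglyMeasurable
  have hz : (∫ ω, Y ω i ∂μ) = 0 := by
    have h2 := (EuclideanSpace.proj (𝕜 := ℝ) i).integral_comp_comm hYi
    rw [hYm] at h2
    simpa using h2
  rw [hmul, hz, mul_zero]

lemma indepFun_of_adapted {m0 : MeasurableSpace Ω} {μ : Measure Ω} {d : ℕ}
    (ξ : ℕ → Ω → EuclideanSpace ℝ (Fin d)) (hmeas : ∀ n, Measurable (ξ n))
    (hindep : iIndepFun ξ μ) {n m : ℕ} (hnm : n ≤ m)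
    {X : Ω → EuclideanSpace ℝ (Fin d)}
    (hX : Measurable[⨆ i ∈ Set.Iio n, MeasurableSpace.comap (ξ i) inferInstance] X) :
    IndepFun X (ξ m) μ := by
  set mi : ℕ → MeasurableSpace Ω :=
    fun i => MeasurableSpace.comap (ξ i) inferInstance with hmi
  have h_le : ∀ i, mi i ≤ m0 := fun i => (hmeas i).comap_le
  have hii : iIndep mi μ := hindep.iIndep
  have hdisj : Disjoint (Set.Iio n) ({m} : Set ℕ) := by
    simp only [Set.disjoint_left, Set.mem_Iio, Set.mem_singleton_iff]
    intro i hi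
    omega
  have hs := indep_iSup_of_disjoint h_le hii hdisj
  have hsm : (⨆ i ∈ ({m} : Set ℕ), mi i) = mi m := by simp
  rw [hsm] at hs
  rw [IndepFun_iff_Indep]
  rw [Indep_iff] at hs ⊢
  intro t1 t2 h1 h2
  exact hs t1 t2 (hX.comap_le t1 h1) h2

end SFEGAux

open SFEGAux

/-- **S-FEG convergence** (Theorem 3 of the paper, first bound).
The noise family is indexed by half-integers: `ξ (2*k)` is the paper's `ξ_k`
and `ξ (2*k+1)` is the paper's `ξ_{k+1/2}`; `σsq n` denotes the variance
`σ_{n/2}²`.  Since `β₀ = 1` forces `z_{1/2} = z₀`, the first full step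
`z₁ = z₀ - (1/L)(F z₀ + ξ₀)` uses the oracle queried at `z₀`.  Then for all
`k ≥ 1`,
`E‖F z_k‖² ≤ 4L²‖z₀-z_*‖²/k² + (6/k²)(σ₀² + ∑_{l=1}^{k-1} (l²σ_l² + (l+1)²σ_{l+1/2}²))`. -/
theorem sfeg_convergence
    {d : ℕ} {Ω : Type*} [MeasurableSpace Ω] (μ : Measure Ω) [IsProbabilityMeasure μ]
    (L : ℝ) (hL : 0 < L)
    (F : EuclideanSpace ℝ (Fin d) → EuclideanSpace ℝ (Fin d))
    (hLip : ∀ z z' : EuclideanSpace ℝ (Fin d), ‖F z - F z'‖ ≤ L * ‖z - z'‖)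
    (hMono : ∀ z z' : EuclideanSpace ℝ (Fin d), 0 ≤ ⟪F z - F z', z - z'⟫)
    (zstar : EuclideanSpace ℝ (Fin d)) (hzstar : F zstar = 0)
    (z0 : EuclideanSpace ℝ (Fin d))
    (ξ : ℕ → Ω → EuclideanSpace ℝ (Fin d))
    (hmeas : ∀ n, Measurable (ξ n))
    (hindep : iIndepFun ξ μ)
    (hmean : ∀ n, ∫ ω, ξ n ω ∂μ = 0)
    (σsq : ℕ → ℝ)
    (hint : ∀ n, Integrable (fun ω => ‖ξ n ω‖ ^ 2) μ)
    (hvar : ∀ n, ∫ ω, ‖ξ n ω‖ ^ 2 ∂μ = σsq n)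
    (z w : ℕ → Ω → EuclideanSpace ℝ (Fin d))
    (hz0 : ∀ ω, z 0 ω = z0)
    (hw : ∀ (k : ℕ) (ω : Ω), w k ω = z k ω + (((k : ℝ) + 1)⁻¹) • (z0 - z k ω)
      - ((1 - ((k : ℝ) + 1)⁻¹) * (1 / L)) • (F (z k ω) + ξ (2 * k) ω))
    (hz1 : ∀ ω : Ω, z 1 ω = z0 - (1 / L) • (F z0 + ξ 0 ω))
    (hz : ∀ (k : ℕ), 1 ≤ k → ∀ ω : Ω,
      z (k + 1) ω = z k ω + (((k : ℝ) + 1)⁻¹) • (z0 - z k ω)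
        - (1 / L) • (F (w k ω) + ξ (2 * k + 1) ω)) :
    ∀ k : ℕ, 1 ≤ k →
      ∫ ω, ‖F (z k ω)‖ ^ 2 ∂μ
        ≤ 4 * L ^ 2 * ‖z0 - zstar‖ ^ 2 / (k : ℝ) ^ 2
          + (6 / (k : ℝ) ^ 2) * (σsq 0 + ∑ l ∈ Finset.Icc 1 (k - 1),
              ((l : ℝ) ^ 2 * σsq (2 * l) + ((l : ℝ) + 1) ^ 2 * σsq (2 * l + 1))) := by
  classical
  have hL' : L ≠ 0 := ne_of_gt hL
  -- F is Lipschitz hence continuous and measurable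
  have hFlip : LipschitzWith ⟨L, hL.le⟩ F :=
    LipschitzWith.of_dist_le_mul (fun x y => by
      rw [dist_eq_norm, dist_eq_norm]; exact hLip x y)
  have hFmeas : Measurable F := hFlip.continuous.measurable
  have hFbound : ∀ x, ‖F x‖ ≤ L * ‖x - zstar‖ := fun x => by
    have h0 := hLip x zstar; rwa [hzstar, sub_zero] at h0
  -- filtration
  set mi : ℕ → MeasurableSpace Ω :=
    fun i => MeasurableSpace.comap (ξ i) inferInstance with hmi
  set Gm : ℕ → MeasurableSpace Ω := fun n => ⨆ i ∈ Set.Iio n, mi i with hGm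
  have hGmono : ∀ {n n' : ℕ}, n ≤ n' → Gm n ≤ Gm n' := by
    intro n n' h
    exact biSup_mono (fun i hi => lt_of_lt_of_le hi h)
  have hξG : ∀ {i n : ℕ}, i < n → Measurable[Gm n] (ξ i) := by
    intro i n hi
    exact Measurable.of_comap_le (le_biSup mi (show i ∈ Set.Iio n from hi))
  have hGle : ∀ n, Gm n ≤ ‹MeasurableSpace Ω› := fun n =>
    iSup₂_le fun i _ => (hmeas i).comap_le
  -- auxiliary sequences
  set what : ℕ → Ω → EuclideanSpace ℝ (Fin d) := fun k ω =>
    z k ω + (((k:ℝ)+1)⁻¹) • (z0 - z k ω)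
      - ((1 - ((k:ℝ)+1)⁻¹) * (1/L)) • F (z k ω) with hwhat
  set zhat : ℕ → Ω → EuclideanSpace ℝ (Fin d) := fun k ω =>
    z k ω + (((k:ℝ)+1)⁻¹) • (z0 - z k ω) - (1/L) • F (w k ω) with hzhat
  -- measurability of the iterates w.r.t. the filtration
  have hzG : ∀ k, Measurable[Gm (2*k)] (z k) := by
    intro k
    induction k with
    | zero =>
      rw [show z 0 = fun _ => z0 from funext hz0]
      exact measurable_const
    | succ n ih =>
      rcases Nat.eq_zero_or_pos n with rfl | hn
      · rw [show z 1 = fun ω => z0 - (1/L) • (F z0 + ξ 0 ω) from funext hz1]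
        exact measurable_const.sub
          ((measurable_const.fun_add (hξG (i := 0) (n := 2*(0+1)) (by omega))).fun_const_smul _)
      · have hzn : Measurable[Gm (2*(n+1))] (z n) := ih.mono (hGmono (by omega)) le_rfl
        have hwn : Measurable[Gm (2*(n+1))] (w n) := by
          rw [show w n = fun ω => z n ω + (((n:ℝ)+1)⁻¹) • (z0 - z n ω)
            - ((1 - ((n:ℝ)+1)⁻¹) * (1/L)) • (F (z n ω) + ξ (2*n) ω) from funext (hw n)]
          exact (hzn.fun_add ((measurable_const.sub hzn).fun_const_smul _)).fun_sub
            (((hFmeas.comp hzn).fun_add (hξG (i := 2*n) (n := 2*(n+1)) (by omega))).fun_const_smul _)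
        rw [show z (n+1) = fun ω => z n ω + (((n:ℝ)+1)⁻¹) • (z0 - z n ω)
          - (1/L) • (F (w n ω) + ξ (2*n+1) ω) from funext (hz n hn)]
        exact (hzn.fun_add ((measurable_const.sub hzn).fun_const_smul _)).fun_sub
          (((hFmeas.comp hwn).fun_add (hξG (i := 2*n+1) (n := 2*(n+1)) (by omega))).fun_const_smul _)
  have hwG : ∀ k, Measurable[Gm (2*k+1)] (w k) := by
    intro k
    have hzk : Measurable[Gm (2*k+1)] (z k) := (hzG k).mono (hGmono (by omega)) le_rfl
    rw [show w k = fun ω => z k ω + (((k:ℝ)+1)⁻¹) • (z0 - z k ω)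
      - ((1 - ((k:ℝ)+1)⁻¹) * (1/L)) • (F (z k ω) + ξ (2*k) ω) from funext (hw k)]
    exact (hzk.fun_add ((measurable_const.sub hzk).fun_const_smul _)).fun_sub
      (((hFmeas.comp hzk).fun_add (hξG (i := 2*k) (n := 2*k+1) (by omega))).fun_const_smul _)
  have hwhatG : ∀ k, Measurable[Gm (2*k)] (what k) := by
    intro k
    have hzk := hzG k
    rw [hwhat]
    exact (hzk.fun_add ((measurable_const.sub hzk).fun_const_smul _)).fun_sub
      ((hFmeas.comp hzk).fun_const_smul _)
  have hzhatG : ∀ k, Measurable[Gm (2*k+1)] (zhat k) := by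
    intro k
    have hzk : Measurable[Gm (2*k+1)] (z k) := (hzG k).mono (hGmono (by omega)) le_rfl
    rw [hzhat]
    exact (hzk.fun_add ((measurable_const.sub hzk).fun_const_smul _)).fun_sub
      ((hFmeas.comp (hwG k)).fun_const_smul _)
  -- plain measurability
  have hzM : ∀ k, Measurable (z k) := fun k => (hzG k).mono (hGle _) le_rfl
  have hwM : ∀ k, Measurable (w k) := fun k => (hwG k).mono (hGle _) le_rfl
  have hwhatM : ∀ k, Measurable (what k) := fun k => (hwhatG k).mono (hGle _) le_rfl
  have hzhatM : ∀ k, Measurable (zhat k) := fun k => (hzhatG k).mono (hGle _) le_rfl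
  -- L² membership
  have hξLp : ∀ n, MemLp (ξ n) 2 μ := fun n =>
    (memLp_two_iff_integrable_sq_norm (hmeas n).aestronglyMeasurable).2 (hint n)
  have hFLp : ∀ (X : Ω → EuclideanSpace ℝ (Fin d)), Measurable X → MemLp X 2 μ →
      MemLp (fun ω => F (X ω)) 2 μ := by
    intro X hXm hXp
    have h2 : MemLp (fun ω => L * ‖X ω - zstar‖) 2 μ :=
      ((hXp.sub (memLp_const zstar)).norm.const_mul L)
    refine MemLp.of_le h2 (hFmeas.comp hXm).aestronglyMeasurable (ae_of_all _ fun ω => ?_)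
    rw [Real.norm_eq_abs, abs_of_nonneg (by positivity)]
    exact hFbound (X ω)
  have hzLp : ∀ k, MemLp (z k) 2 μ := by
    intro k
    induction k with
    | zero =>
      rw [show z 0 = fun _ => z0 from funext hz0]
      exact memLp_const z0
    | succ n ih =>
      rcases Nat.eq_zero_or_pos n with rfl | hn
      · rw [show z 1 = fun ω => z0 - (1/L) • (F z0 + ξ 0 ω) from funext hz1]
        exact (memLp_const z0).sub (((memLp_const (F z0)).add (hξLp 0)).const_smul (1/L))
      · have hwn : MemLp (w n) 2 μ := by
          rw [show w n = fun ω => z n ω + (((n:ℝ)+1)⁻¹) • (z0 - z n ω)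
            - ((1 - ((n:ℝ)+1)⁻¹) * (1/L)) • (F (z n ω) + ξ (2*n) ω) from funext (hw n)]
          exact (ih.add (((memLp_const z0).sub ih).const_smul (((n:ℝ)+1)⁻¹))).sub
            (((hFLp _ (hzM n) ih).add (hξLp _)).const_smul ((1 - ((n:ℝ)+1)⁻¹) * (1/L)))
        rw [show z (n+1) = fun ω => z n ω + (((n:ℝ)+1)⁻¹) • (z0 - z n ω)
          - (1/L) • (F (w n ω) + ξ (2*n+1) ω) from funext (hz n hn)]
        exact (ih.add (((memLp_const z0).sub ih).const_smul (((n:ℝ)+1)⁻¹))).sub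
          (((hFLp _ (hwM n) hwn).add (hξLp _)).const_smul (1/L))
  have hwLp : ∀ k, MemLp (w k) 2 μ := by
    intro k
    rw [show w k = fun ω => z k ω + (((k:ℝ)+1)⁻¹) • (z0 - z k ω)
      - ((1 - ((k:ℝ)+1)⁻¹) * (1/L)) • (F (z k ω) + ξ (2*k) ω) from funext (hw k)]
    exact ((hzLp k).add (((memLp_const z0).sub (hzLp k)).const_smul (((k:ℝ)+1)⁻¹))).sub
      (((hFLp _ (hzM k) (hzLp k)).add (hξLp _)).const_smul ((1 - ((k:ℝ)+1)⁻¹) * (1/L)))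
  have hwhatLp : ∀ k, MemLp (what k) 2 μ := by
    intro k
    rw [hwhat]
    exact ((hzLp k).add (((memLp_const z0).sub (hzLp k)).const_smul (((k:ℝ)+1)⁻¹))).sub
      ((hFLp _ (hzM k) (hzLp k)).const_smul ((1 - ((k:ℝ)+1)⁻¹) * (1/L)))
  have hzhatLp : ∀ k, MemLp (zhat k) 2 μ := by
    intro k
    rw [hzhat]
    exact ((hzLp k).add (((memLp_const z0).sub (hzLp k)).const_smul (((k:ℝ)+1)⁻¹))).sub
      ((hFLp _ (hwM k) (hwLp k)).const_smul (1/L))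
  -- vanishing cross expectations
  have hvanish : ∀ {n m : ℕ} (X : Ω → EuclideanSpace ℝ (Fin d)), n ≤ m →
      Measurable[Gm n] X → MemLp X 2 μ → (∫ ω, ⟪X ω, ξ m ω⟫ ∂μ) = 0 := by
    intro n m X hnm hXG hXLp
    exact indep_integral_inner_zero
      (indepFun_of_adapted ξ hmeas hindep hnm hXG) hXLp (hξLp m) (hmean m)
  have hvanishξ : ∀ {n m : ℕ}, n ≠ m → (∫ ω, ⟪ξ n ω, ξ m ω⟫ ∂μ) = 0 := by
    intro n m h
    exact indep_integral_inner_zero (hindep.indepFun h) (hξLp n) (hξLp m) (hmean m)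
  -- the Lyapunov functional
  set Vf : ℕ → Ω → ℝ := fun n ω =>
    ((n:ℝ)^2/2) * ‖F (z n ω)‖^2 + (n:ℝ) * L * ⟪F (z n ω), z n ω - z0⟫ with hVf
  have hFzLp : ∀ k, MemLp (fun ω => F (z k ω)) 2 μ := fun k => hFLp _ (hzM k) (hzLp k)
  have hnormsq_int : ∀ (X : Ω → EuclideanSpace ℝ (Fin d)), MemLp X 2 μ →
      Integrable (fun ω => ‖X ω‖^2) μ := fun X hX =>
    (memLp_two_iff_integrable_sq_norm hX.aestronglyMeasurable).1 hX
  have hVint : ∀ k, Integrable (Vf k) μ := by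
    intro k
    rw [hVf]
    exact ((hnormsq_int _ (hFzLp k)).const_mul _).add
      ((integrable_inner_of (hFzLp k) ((hzLp k).sub (memLp_const z0))).const_mul _)
  -- the one-step recursion in expectation
  have hstep : ∀ k : ℕ, 1 ≤ k →
      (∫ ω, Vf (k+1) ω ∂μ) ≤ (∫ ω, Vf k ω ∂μ)
        + (3/2)*(k:ℝ)^2 * σsq (2*k) + (3/2)*((k:ℝ)+1)^2 * σsq (2*k+1) := by
    intro k hk
    have hK : (0:ℝ) ≤ (k:ℝ) := Nat.cast_nonneg k
    set f1 : Ω → ℝ := fun ω => (k:ℝ)^2 * ⟪F (z k ω), ξ (2*k) ω⟫ with hf1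
    set f2 : Ω → ℝ := fun ω => (k:ℝ)*((k:ℝ)+1) * ⟪F (what k ω), ξ (2*k) ω⟫ with hf2
    set f3 : Ω → ℝ := fun ω => ((k:ℝ)+1)^2 * ⟪F (w k ω), ξ (2*k+1) ω⟫ with hf3
    set f4 : Ω → ℝ := fun ω => ((k:ℝ)+1)^2 * ⟪F (zhat k ω), ξ (2*k+1) ω⟫ with hf4
    set f5 : Ω → ℝ := fun ω => (k:ℝ)*((k:ℝ)+1) * ⟪ξ (2*k) ω, ξ (2*k+1) ω⟫ with hf5
    set f6 : Ω → ℝ := fun ω => (3/2)*(k:ℝ)^2 * ‖ξ (2*k) ω‖^2 with hf6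
    set f7 : Ω → ℝ := fun ω => (3/2)*((k:ℝ)+1)^2 * ‖ξ (2*k+1) ω‖^2 with hf7
    set T : Ω → ℝ := fun ω => f1 ω - f2 ω + f3 ω - f4 ω - f5 ω + f6 ω + f7 ω with hT
    have hpath : ∀ ω, Vf (k+1) ω ≤ Vf k ω + T ω := by
      intro ω
      have h := step_pathwise (k:ℝ) L hK hL z0 (z k ω) (w k ω) (z (k+1) ω)
        (what k ω) (zhat k ω) (F (z k ω)) (F (w k ω)) (F (z (k+1) ω))
        (F (what k ω)) (F (zhat k ω)) (ξ (2*k) ω) (ξ (2*k+1) ω)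
        (hw k ω) (by rw [hwhat]) (hz k hk ω) (by rw [hzhat])
        (hMono _ _) (hLip _ _) (hLip _ _) (hLip _ _)
      rw [hVf, hT, hf1, hf2, hf3, hf4, hf5, hf6, hf7]
      push_cast
      linarith [h]
    have i1 : Integrable f1 μ := by
      rw [hf1]; exact (integrable_inner_of (hFzLp k) (hξLp _)).const_mul _
    have i2 : Integrable f2 μ := by
      rw [hf2]
      exact (integrable_inner_of (hFLp _ (hwhatM k) (hwhatLp k)) (hξLp _)).const_mul _
    have i3 : Integrable f3 μ := by
      rw [hf3]
      exact (integrable_inner_of (hFLp _ (hwM k) (hwLp k)) (hξLp _)).const_mul _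
    have i4 : Integrable f4 μ := by
      rw [hf4]
      exact (integrable_inner_of (hFLp _ (hzhatM k) (hzhatLp k)) (hξLp _)).const_mul _
    have i5 : Integrable f5 μ := by
      rw [hf5]; exact (integrable_inner_of (hξLp _) (hξLp _)).const_mul _
    have i6 : Integrable f6 μ := by rw [hf6]; exact (hint (2*k)).const_mul _
    have i7 : Integrable f7 μ := by rw [hf7]; exact (hint (2*k+1)).const_mul _
    have hTint : Integrable T μ := by
      rw [hT]
      exact ((((((i1.sub i2).add i3).sub i4).sub i5).add i6).add i7)
    have e1 : (∫ ω, f1 ω ∂μ) = 0 := by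
      rw [hf1]
      rw [integral_const_mul _ _, hvanish (fun ω => F (z k ω)) le_rfl (hFmeas.comp (hzG k)) (hFzLp k), mul_zero]
    have e2 : (∫ ω, f2 ω ∂μ) = 0 := by
      rw [hf2]
      rw [integral_const_mul _ _,
        hvanish (fun ω => F (what k ω)) le_rfl (hFmeas.comp (hwhatG k)) (hFLp _ (hwhatM k) (hwhatLp k)), mul_zero]
    have e3 : (∫ ω, f3 ω ∂μ) = 0 := by
      rw [hf3]
      rw [integral_const_mul _ _,
        hvanish (fun ω => F (w k ω)) le_rfl (hFmeas.comp (hwG k)) (hFLp _ (hwM k) (hwLp k)), mul_zero]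
    have e4 : (∫ ω, f4 ω ∂μ) = 0 := by
      rw [hf4]
      rw [integral_const_mul _ _,
        hvanish (fun ω => F (zhat k ω)) le_rfl (hFmeas.comp (hzhatG k)) (hFLp _ (hzhatM k) (hzhatLp k)), mul_zero]
    have e5 : (∫ ω, f5 ω ∂μ) = 0 := by
      rw [hf5]
      rw [integral_const_mul _ _, hvanishξ (by omega), mul_zero]
    have e6 : (∫ ω, f6 ω ∂μ) = (3/2)*(k:ℝ)^2 * σsq (2*k) := by
      rw [hf6, integral_const_mul _ _, hvar (2*k)]
    have e7 : (∫ ω, f7 ω ∂μ) = (3/2)*((k:ℝ)+1)^2 * σsq (2*k+1) := by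
      rw [hf7, integral_const_mul _ _, hvar (2*k+1)]
    have g12 : (∫ ω, (f1 ω - f2 ω) ∂μ) = (∫ ω, f1 ω ∂μ) - ∫ ω, f2 ω ∂μ :=
      integral_sub i1 i2
    have g3 : (∫ ω, (f1 ω - f2 ω + f3 ω) ∂μ)
        = (∫ ω, (f1 ω - f2 ω) ∂μ) + ∫ ω, f3 ω ∂μ := integral_add (i1.sub i2) i3
    have g4 : (∫ ω, (f1 ω - f2 ω + f3 ω - f4 ω) ∂μ)
        = (∫ ω, (f1 ω - f2 ω + f3 ω) ∂μ) - ∫ ω, f4 ω ∂μ :=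
      integral_sub ((i1.sub i2).add i3) i4
    have g5 : (∫ ω, (f1 ω - f2 ω + f3 ω - f4 ω - f5 ω) ∂μ)
        = (∫ ω, (f1 ω - f2 ω + f3 ω - f4 ω) ∂μ) - ∫ ω, f5 ω ∂μ :=
      integral_sub (((i1.sub i2).add i3).sub i4) i5
    have g6 : (∫ ω, (f1 ω - f2 ω + f3 ω - f4 ω - f5 ω + f6 ω) ∂μ)
        = (∫ ω, (f1 ω - f2 ω + f3 ω - f4 ω - f5 ω) ∂μ) + ∫ ω, f6 ω ∂μ :=
      integral_add ((((i1.sub i2).add i3).sub i4).sub i5) i6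
    have g7 : (∫ ω, (f1 ω - f2 ω + f3 ω - f4 ω - f5 ω + f6 ω + f7 ω) ∂μ)
        = (∫ ω, (f1 ω - f2 ω + f3 ω - f4 ω - f5 ω + f6 ω) ∂μ) + ∫ ω, f7 ω ∂μ :=
      integral_add (((((i1.sub i2).add i3).sub i4).sub i5).add i6) i7
    have hTval : (∫ ω, T ω ∂μ)
        = (3/2)*(k:ℝ)^2 * σsq (2*k) + (3/2)*((k:ℝ)+1)^2 * σsq (2*k+1) := by
      rw [hT]
      rw [g7, g6, g5, g4, g3, g12, e1, e2, e3, e4, e5, e6, e7]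
      ring
    calc (∫ ω, Vf (k+1) ω ∂μ) ≤ ∫ ω, (Vf k ω + T ω) ∂μ :=
          integral_mono (hVint (k+1)) ((hVint k).add hTint) hpath
      _ = (∫ ω, Vf k ω ∂μ) + ∫ ω, T ω ∂μ := integral_add (hVint k) hTint
      _ = _ := by rw [hTval]; ring
  -- the initial bound
  have hV1 : (∫ ω, Vf 1 ω ∂μ) ≤ (3/2) * σsq 0 := by
    have hpath : ∀ ω, Vf 1 ω ≤
        ⟪F z0, ξ 0 ω⟫ - ⟪F (z0 - (1/L) • F z0), ξ 0 ω⟫ + (3/2) * ‖ξ 0 ω‖^2 := by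
      intro ω
      have h := v1_pathwise L hL z0 (z 1 ω) (z0 - (1/L) • F z0) (F z0) (F (z 1 ω))
        (F (z0 - (1/L) • F z0)) (ξ 0 ω) (hz1 ω) rfl (hLip _ _) (hLip _ _)
      rw [hVf]
      push_cast
      linarith [h]
    set q1 : Ω → ℝ := fun ω => ⟪F z0, ξ 0 ω⟫ with hq1
    set q2 : Ω → ℝ := fun ω => ⟪F (z0 - (1/L) • F z0), ξ 0 ω⟫ with hq2
    set q3 : Ω → ℝ := fun ω => (3/2 : ℝ) * ‖ξ 0 ω‖^2 with hq3
    have j1 : Integrable q1 μ := by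
      rw [hq1]; exact integrable_inner_of (memLp_const (F z0)) (hξLp 0)
    have j2 : Integrable q2 μ := by
      rw [hq2]; exact integrable_inner_of (memLp_const _) (hξLp 0)
    have j3 : Integrable q3 μ := by rw [hq3]; exact (hint 0).const_mul _
    have hξ0i : Integrable (ξ 0) μ := (hξLp 0).integrable one_le_two
    have hpath' : ∀ ω, Vf 1 ω ≤ q1 ω - q2 ω + q3 ω := by
      intro ω
      rw [hq1, hq2, hq3]
      exact hpath ω
    have e1' : (∫ ω, q1 ω ∂μ) = 0 := by
      rw [hq1, integral_inner hξ0i, hmean 0, inner_zero_right]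
    have e2' : (∫ ω, q2 ω ∂μ) = 0 := by
      rw [hq2, integral_inner hξ0i, hmean 0, inner_zero_right]
    have e3' : (∫ ω, q3 ω ∂μ) = (3/2) * σsq 0 := by
      rw [hq3, integral_const_mul _ _, hvar 0]
    have g12' : (∫ ω, (q1 ω - q2 ω) ∂μ) = (∫ ω, q1 ω ∂μ) - ∫ ω, q2 ω ∂μ :=
      integral_sub j1 j2
    have g3' : (∫ ω, (q1 ω - q2 ω + q3 ω) ∂μ)
        = (∫ ω, (q1 ω - q2 ω) ∂μ) + ∫ ω, q3 ω ∂μ := integral_add (j1.sub j2) j3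
    calc (∫ ω, Vf 1 ω ∂μ) ≤ ∫ ω, (q1 ω - q2 ω + q3 ω) ∂μ :=
        integral_mono (hVint 1) ((j1.sub j2).add j3) hpath'
      _ = (3/2) * σsq 0 := by rw [g3', g12', e1', e2', e3']; ring
  -- accumulated bound
  have hacc : ∀ k : ℕ, 1 ≤ k → (∫ ω, Vf k ω ∂μ) ≤
      (3/2) * (σsq 0 + ∑ l ∈ Finset.Icc 1 (k-1),
        ((l:ℝ)^2 * σsq (2*l) + ((l:ℝ)+1)^2 * σsq (2*l+1))) := by
    intro k hk
    induction k, hk using Nat.le_induction with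
    | base =>
      have h0 : Finset.Icc 1 (1-1) = (∅ : Finset ℕ) := by decide
      rw [h0]
      simpa using hV1
    | succ n hn ih =>
      obtain ⟨m, rfl⟩ : ∃ m, n = m + 1 := ⟨n - 1, (Nat.succ_pred_eq_of_pos hn).symm⟩
      have hsum : ∑ l ∈ Finset.Icc 1 ((m+1+1)-1),
            ((l:ℝ)^2 * σsq (2*l) + ((l:ℝ)+1)^2 * σsq (2*l+1))
          = (∑ l ∈ Finset.Icc 1 ((m+1)-1),
            ((l:ℝ)^2 * σsq (2*l) + ((l:ℝ)+1)^2 * σsq (2*l+1)))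
            + (((m+1:ℕ):ℝ)^2 * σsq (2*(m+1)) + (((m+1:ℕ):ℝ)+1)^2 * σsq (2*(m+1)+1)) := by
        rw [show (m+1+1)-1 = m+1 from rfl, show (m+1)-1 = m from rfl]
        exact Finset.sum_Icc_succ_top (by omega) _
      have hstep' := hstep (m+1) hn
      rw [hsum]
      push_cast at hstep' ih ⊢
      linarith
  -- conclusion
  intro k hk
  have hKpos : (0:ℝ) < (k:ℝ) := by exact_mod_cast Nat.pos_of_ne_zero (by omega)
  set D := ‖z0 - zstar‖ with hD
  have hDnn : 0 ≤ D := norm_nonneg _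
  have hlow : ∀ ω, ((k:ℝ)^2/2) * ‖F (z k ω)‖^2 - (k:ℝ)*L*D*‖F (z k ω)‖ ≤ Vf k ω := by
    intro ω
    rw [hVf]
    have hdecomp : ⟪F (z k ω), z k ω - z0⟫
        = ⟪F (z k ω) - F zstar, z k ω - zstar⟫ + ⟪F (z k ω), zstar - z0⟫ := by
      rw [hzstar, sub_zero, ← inner_add_right]
      congr 1
      abel
    have h1 : 0 ≤ ⟪F (z k ω) - F zstar, z k ω - zstar⟫ := hMono _ _
    have h2 : -(‖F (z k ω)‖ * D) ≤ ⟪F (z k ω), zstar - z0⟫ := by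
      have h3 := abs_real_inner_le_norm (F (z k ω)) (zstar - z0)
      have h4 := (abs_le.1 h3).1
      have h5 : ‖zstar - z0‖ = D := norm_sub_rev _ _
      rw [h5] at h4
      linarith
    have h6 : -(‖F (z k ω)‖ * D) ≤ ⟪F (z k ω), z k ω - z0⟫ := by
      rw [hdecomp]; linarith
    have h7 : (k:ℝ)*L*(-(‖F (z k ω)‖ * D)) ≤ (k:ℝ)*L*⟪F (z k ω), z k ω - z0⟫ :=
      mul_le_mul_of_nonneg_left h6 (by positivity)
    nlinarith [h7]
  have hintnorm : Integrable (fun ω => ‖F (z k ω)‖) μ :=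
    ((hFzLp k).integrable one_le_two).norm
  have hintnormsq : Integrable (fun ω => ‖F (z k ω)‖^2) μ := hnormsq_int _ (hFzLp k)
  have hIlow : ((k:ℝ)^2/2) * (∫ ω, ‖F (z k ω)‖^2 ∂μ)
      - (k:ℝ)*L*D*(∫ ω, ‖F (z k ω)‖ ∂μ) ≤ ∫ ω, Vf k ω ∂μ := by
    have hLHSint : Integrable
        (fun ω => ((k:ℝ)^2/2) * ‖F (z k ω)‖^2 - (k:ℝ)*L*D*‖F (z k ω)‖) μ :=
      (hintnormsq.const_mul _).sub (hintnorm.const_mul _)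
    have h0 := integral_mono hLHSint (hVint k) hlow
    have hIsub : (∫ ω, (((k:ℝ)^2/2) * ‖F (z k ω)‖^2 - (k:ℝ)*L*D*‖F (z k ω)‖) ∂μ)
        = (∫ ω, ((k:ℝ)^2/2) * ‖F (z k ω)‖^2 ∂μ)
          - ∫ ω, (k:ℝ)*L*D*‖F (z k ω)‖ ∂μ :=
      integral_sub (hintnormsq.const_mul _) (hintnorm.const_mul _)
    rw [hIsub, integral_const_mul _ _, integral_const_mul _ _] at h0
    exact h0
  set t := ∫ ω, ‖F (z k ω)‖^2 ∂μ with ht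
  set m := ∫ ω, ‖F (z k ω)‖ ∂μ with hm
  have hm2 : m^2 ≤ t := by
    have h0 : 0 ≤ ∫ ω, (‖F (z k ω)‖ - m)^2 ∂μ := integral_nonneg (fun ω => sq_nonneg _)
    have hexp : (∫ ω, (‖F (z k ω)‖ - m)^2 ∂μ) = t - 2*m*m + m^2 := by
      have h1 : ∀ ω, (‖F (z k ω)‖ - m)^2
          = ‖F (z k ω)‖^2 - 2*m*‖F (z k ω)‖ + m^2 := fun ω => by ring
      simp_rw [h1]
      have ga : (∫ ω, (‖F (z k ω)‖^2 - 2*m*‖F (z k ω)‖ + m^2) ∂μ)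
          = (∫ ω, (‖F (z k ω)‖^2 - 2*m*‖F (z k ω)‖) ∂μ) + ∫ _ω, (m^2 : ℝ) ∂μ :=
        integral_add (hintnormsq.sub (hintnorm.const_mul _)) (integrable_const _)
      have gb : (∫ ω, (‖F (z k ω)‖^2 - 2*m*‖F (z k ω)‖) ∂μ)
          = (∫ ω, ‖F (z k ω)‖^2 ∂μ) - ∫ ω, 2*m*‖F (z k ω)‖ ∂μ :=
        integral_sub hintnormsq (hintnorm.const_mul _)
      rw [ga, gb, integral_const_mul _ _, integral_const]
      simp [measure_univ, ← ht, ← hm]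
      try ring
    nlinarith [h0, hexp]
  have hmnn : 0 ≤ m := integral_nonneg (fun ω => norm_nonneg _)
  set S := σsq 0 + ∑ l ∈ Finset.Icc 1 (k-1),
    ((l:ℝ)^2 * σsq (2*l) + ((l:ℝ)+1)^2 * σsq (2*l+1)) with hS
  have hmain : ((k:ℝ)^2/2) * t - (k:ℝ)*L*D*m ≤ (3/2)*S := by
    have := hacc k hk
    rw [← hS] at this
    linarith [hIlow, this]
  have hfin : t * (k:ℝ)^2 ≤ 4*L^2*D^2 + 6*S := by
    nlinarith [sq_nonneg ((k:ℝ)*m - 2*L*D),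
      mul_le_mul_of_nonneg_left hm2 (by positivity : (0:ℝ) ≤ (k:ℝ)^2)]
  have hK2 : (0:ℝ) < (k:ℝ)^2 := by positivity
  calc t ≤ (4*L^2*D^2 + 6*S) / (k:ℝ)^2 := (le_div_iff₀ hK2).mpr hfin
    _ = 4 * L^2 * D^2 / (k:ℝ)^2 + (6 / (k:ℝ)^2) * S := by ring
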